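/- Let μ be a probability measure on ℝⁿ with log-concave density f and barycenter at the origin. Then max_{x∈ℝⁿ} f(x) ≤ eⁿ f(0). -/
import Mathlib

set_option maxHeartbeats 1000000

open MeasureTheory Set

theorem stmt_14 (n : ℕ) (f : EuclideanSpace ℝ (Fin n) → ℝ)
    (hnn : ∀ x, 0 ≤ f x) (hint : Integrable f) (hprob : ∫ x, f x = 1)
    (hlc : ∀ x y : EuclideanSpace ℝ (Fin n), ∀ t ∈ Icc (0 : ℝ) 1,
      f x ^ t * f y ^ (1 - t) ≤ f (t • x + (1 - t) • y))
    (hbint : Integrable fun x => f x • x)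
    (hbar : ∫ x, f x • x = (0 : EuclideanSpace ℝ (Fin n))) :
    ∀ x, f x ≤ Real.exp n * f 0 := by
  set S : Set (EuclideanSpace ℝ (Fin n)) := {x | 0 < f x} with hS
  set U : Set (EuclideanSpace ℝ (Fin n)) := interior S with hUdef
  -- convexity of S
  have hSconv : Convex ℝ S := by
    intro x hx y hy a b ha hb hab
    have h := hlc x y a ⟨ha, by linarith⟩
    have hb' : b = 1 - a := by linarith
    subst hb'
    refine lt_of_lt_of_le ?_ h
    exact mul_pos (Real.rpow_pos_of_pos hx a) (Real.rpow_pos_of_pos hy (1 - a))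
  have hUconv : Convex ℝ U := hSconv.interior
  have hUopen : IsOpen U := isOpen_interior
  -- a.e. x, x ∈ U or f x = 0
  have hfrontier : volume (frontier S) = 0 := hSconv.addHaar_frontier volume
  have hae : ∀ᵐ x : EuclideanSpace ℝ (Fin n), x ∈ U ∨ f x = 0 := by
    rw [MeasureTheory.ae_iff]
    refine measure_mono_null (fun x hx => ?_) hfrontier
    simp only [Set.mem_setOf_eq, not_or] at hx
    obtain ⟨hxU, hxf⟩ := hx
    have hxS : x ∈ S := lt_of_le_of_ne (hnn x) (Ne.symm hxf)
    exact ⟨subset_closure hxS, hxU⟩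
  -- S has positive measure
  have hSpos : volume S ≠ 0 := by
    intro h0
    have : f =ᵐ[volume] 0 := by
      refine measure_mono_null (fun x hx => ?_) h0
      simp only [Set.mem_setOf_eq] at hx ⊢
      exact lt_of_le_of_ne (hnn x) (Ne.symm hx)
    rw [integral_congr_ae this] at hprob
    simp at hprob
  -- U is nonempty
  have hUne : U.Nonempty := by
    by_contra h
    rw [Set.not_nonempty_iff_eq_empty] at h
    apply hSpos
    refine measure_mono_null (fun x hx => ?_) hfrontier
    exact ⟨subset_closure hx, by rw [hUdef] at h; simp [h]⟩
  -- 0 ∈ U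
  have hU0 : (0 : EuclideanSpace ℝ (Fin n)) ∈ U := by
    by_contra h0
    obtain ⟨L, hL⟩ := geometric_hahn_banach_open_point hUconv hUopen h0
    have hLint : Integrable (fun x => L (f x • x)) := L.integrable_comp hbint
    have hLzero : ∫ x, L (f x • x) = 0 := by
      rw [L.integral_comp_comm hbint, hbar, map_zero]
    have hle : ∀ᵐ x : EuclideanSpace ℝ (Fin n), 0 ≤ -(L (f x • x)) := by
      filter_upwards [hae] with x hx
      rcases hx with hx | hx
      · have := hL x hx
        rw [map_zero] at this
        have : L x < 0 := this
        have hfx : 0 ≤ f x := hnn x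
        rw [L.map_smul]
        simp only [smul_eq_mul, neg_nonneg]
        exact mul_nonpos_of_nonneg_of_nonpos hfx this.le
      · simp [hx]
    have hzero : (fun x => -(L (f x • x))) =ᵐ[volume] 0 := by
      rw [← integral_eq_zero_iff_of_nonneg_ae hle hLint.neg]
      rw [integral_neg, hLzero, neg_zero]
    -- but on U, -(L (f x • x)) > 0
    have hUnull : volume U = 0 := by
      refine measure_mono_null (fun x hx => ?_) (ae_iff.mp hzero)
      simp only [Set.mem_setOf_eq, Pi.zero_apply]
      have hfx : 0 < f x := (interior_subset hx : x ∈ S)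
      have hLx : L x < 0 := by have := hL x hx; rwa [map_zero] at this
      rw [L.map_smul]
      simp only [smul_eq_mul]
      intro hcontra
      nlinarith [neg_eq_zero.mp hcontra]
    exact (hUopen.measure_pos volume hUne).ne' hUnull
  have hf0 : 0 < f 0 := (interior_subset hU0 : (0 : EuclideanSpace ℝ (Fin n)) ∈ S)
  intro z
  by_cases hfz0 : f z ≤ 0
  · have : f z = 0 := le_antisymm hfz0 (hnn z)
    rw [this]
    positivity
  push_neg at hfz0
  -- main estimate for t ∈ (0,1)
  have key : ∀ t ∈ Ioo (0:ℝ) 1, Real.log (f z) ≤ n * (-Real.log t) / (1 - t) + Real.log (f 0) := by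
    intro t ht
    obtain ⟨ht0, ht1⟩ := ht
    have hs0 : (0:ℝ) < 1 - t := by linarith
    -- pointwise consequence of log-concavity
    have hpt : ∀ y, f z ^ (1 - t) * f y ^ t ≤ f ((1 - t) • z + t • y) := by
      intro y
      have h := hlc z y (1 - t) ⟨hs0.le, by linarith⟩
      have he : (1:ℝ) - (1 - t) = t := by ring
      rwa [he] at h
    have hcint : Integrable (fun y => f ((1 - t) • z + t • y)) :=
      (hint.comp_add_left ((1 - t) • z)).comp_smul ht0.ne'
    have hcval : ∫ y, f ((1 - t) • z + t • y) = (t ^ n)⁻¹ := by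
      have h1 : ∫ y, f ((1 - t) • z + t • y)
          = |(t ^ (Module.finrank ℝ (EuclideanSpace ℝ (Fin n))))⁻¹| • ∫ w, f ((1 - t) • z + w) :=
        Measure.integral_comp_smul volume (fun w => f ((1 - t) • z + w)) t
      rw [h1, integral_add_left_eq_self (μ := volume) f ((1 - t) • z), hprob,
        finrank_euclideanSpace_fin, smul_eq_mul, mul_one, abs_of_pos (by positivity)]
    have hmeas_ft : AEStronglyMeasurable (fun y => f y ^ t) volume :=
      (Real.continuous_rpow_const ht0.le).comp_aestronglyMeasurable hint.aestronglyMeasurable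
    have hzs : (0:ℝ) < f z ^ (1 - t) := Real.rpow_pos_of_pos hfz0 _
    have hft_int : Integrable (fun y => f y ^ t) := by
      refine ⟨hmeas_ft, ?_⟩
      rw [hasFiniteIntegral_iff_ofReal
        (Filter.Eventually.of_forall fun y => Real.rpow_nonneg (hnn y) t)]
      have hb : ENNReal.ofReal (f z ^ (1 - t)) * ∫⁻ y, ENNReal.ofReal (f y ^ t)
          ≤ ENNReal.ofReal ((t ^ n)⁻¹) := by
        rw [← lintegral_const_mul' _ _ ENNReal.ofReal_ne_top]
        calc ∫⁻ y, ENNReal.ofReal (f z ^ (1 - t)) * ENNReal.ofReal (f y ^ t)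
            = ∫⁻ y, ENNReal.ofReal (f z ^ (1 - t) * f y ^ t) := by
              simp_rw [← ENNReal.ofReal_mul hzs.le]
          _ ≤ ∫⁻ y, ENNReal.ofReal (f ((1 - t) • z + t • y)) :=
              lintegral_mono fun y => ENNReal.ofReal_le_ofReal (hpt y)
          _ = ENNReal.ofReal (∫ y, f ((1 - t) • z + t • y)) :=
              (ofReal_integral_eq_lintegral_ofReal hcint
                (Filter.Eventually.of_forall fun y => hnn _)).symm
          _ = ENNReal.ofReal ((t ^ n)⁻¹) := by rw [hcval]
      have hzs' : ENNReal.ofReal (f z ^ (1 - t)) ≠ 0 := by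
        simp only [ne_eq, ENNReal.ofReal_eq_zero, not_le]
        exact hzs
      have hle : ∫⁻ y, ENNReal.ofReal (f y ^ t)
          ≤ ENNReal.ofReal ((t ^ n)⁻¹) / ENNReal.ofReal (f z ^ (1 - t)) := by
        rw [ENNReal.le_div_iff_mul_le (Or.inl hzs') (Or.inl ENNReal.ofReal_ne_top), mul_comm]
        exact hb
      exact lt_of_le_of_lt hle (ENNReal.div_lt_top ENNReal.ofReal_ne_top hzs')
    have hA : f z ^ (1 - t) * ∫ y, f y ^ t ≤ (t ^ n)⁻¹ := by
      have h2 := integral_mono (hft_int.const_mul (f z ^ (1 - t))) hcint hpt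
      rwa [integral_const_mul, hcval] at h2
    -- Part B : Jensen-type lower bound via supporting hyperplane
    have hB : f 0 ^ (t - 1) ≤ ∫ y, f y ^ t := by
      have hφconv : ConvexOn ℝ U (fun x => f x ^ (t - 1)) := by
        refine ⟨hUconv, fun x hx y hy a b ha hb hab => ?_⟩
        have hfx : 0 < f x := (interior_subset hx : x ∈ S)
        have hfy : 0 < f y := (interior_subset hy : y ∈ S)
        have hfxy : f x ^ a * f y ^ b ≤ f (a • x + b • y) := by
          have h := hlc x y a ⟨ha, by linarith⟩
          have hba : b = 1 - a := by linarith
          rw [hba]; exact h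
        have hpos : 0 < f x ^ a * f y ^ b :=
          mul_pos (Real.rpow_pos_of_pos hfx a) (Real.rpow_pos_of_pos hfy b)
        have h1 : f (a • x + b • y) ^ (t - 1) ≤ (f x ^ a * f y ^ b) ^ (t - 1) :=
          Real.rpow_le_rpow_of_nonpos hpos hfxy (by linarith)
        refine h1.trans ?_
        have h2 : (f x ^ a * f y ^ b) ^ (t - 1)
            = (f x ^ (t - 1)) ^ a * (f y ^ (t - 1)) ^ b := by
          rw [Real.mul_rpow (Real.rpow_pos_of_pos hfx a).le (Real.rpow_pos_of_pos hfy b).le,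
            ← Real.rpow_mul hfx.le, ← Real.rpow_mul hfy.le,
            ← Real.rpow_mul hfx.le, ← Real.rpow_mul hfy.le, mul_comm a, mul_comm b]
        rw [h2]
        have := Real.geom_mean_le_arith_mean2_weighted ha hb
          (Real.rpow_nonneg hfx.le (t-1)) (Real.rpow_nonneg hfy.le (t-1)) hab
        simpa [smul_eq_mul] using this
      have hφcont : ContinuousOn (fun x => f x ^ (t - 1)) U := hφconv.continuousOn hUopen
      set A : Set ((EuclideanSpace ℝ (Fin n)) × ℝ) := {p | p.1 ∈ U ∧ f p.1 ^ (t-1) < p.2}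
        with hAdef
      have hAopen : IsOpen A := by
        have hg : ContinuousOn (fun p : (EuclideanSpace ℝ (Fin n)) × ℝ => f p.1 ^ (t-1) - p.2)
            (U ×ˢ (univ : Set ℝ)) := by
          apply ContinuousOn.sub
          · exact hφcont.comp continuousOn_fst (fun p hp => hp.1)
          · exact continuousOn_snd
        have heq : A = (U ×ˢ (univ : Set ℝ)) ∩
            (fun p : (EuclideanSpace ℝ (Fin n)) × ℝ => f p.1 ^ (t-1) - p.2) ⁻¹' (Iio 0) := by
          ext p
          simp [hAdef, sub_neg, and_comm, Set.mem_prod]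
        rw [heq]
        exact hg.isOpen_inter_preimage (hUopen.prod isOpen_univ) isOpen_Iio
      have hAconv : Convex ℝ A := by
        rintro ⟨x, r⟩ ⟨hx, hr⟩ ⟨y, q⟩ ⟨hy, hq⟩ a b ha hb hab
        refine ⟨hUconv hx hy ha hb hab, ?_⟩
        have h1 := hφconv.2 hx hy ha hb hab
        have h2 : a • (f x ^ (t-1)) + b • (f y ^ (t-1)) < a • r + b • q := by
          simp only [smul_eq_mul]
          rcases eq_or_lt_of_le ha with rfl | ha'
          · simp only [zero_mul, zero_add]
            have hb1 : b = 1 := by linarith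
            rw [hb1] at *
            simpa using hq
          · have h3 : a * (f x ^ (t-1)) < a * r := by exact mul_lt_mul_of_pos_left hr ha'
            have h4 : b * (f y ^ (t-1)) ≤ b * q := mul_le_mul_of_nonneg_left hq.le hb
            linarith
        exact lt_of_le_of_lt h1 h2
      have hnotmem : ((0 : EuclideanSpace ℝ (Fin n)), f 0 ^ (t-1)) ∉ A := fun h =>
        lt_irrefl _ h.2
      obtain ⟨L, hL⟩ := geometric_hahn_banach_open_point hAconv hAopen hnotmem
      have hdecomp : ∀ (x : EuclideanSpace ℝ (Fin n)) (r : ℝ),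
          L (x, r) = L (x, 0) + r * L (0, 1) := by
        intro x r
        have : ((x, r) : (EuclideanSpace ℝ (Fin n)) × ℝ)
            = (x, 0) + r • ((0 : EuclideanSpace ℝ (Fin n)), (1:ℝ)) := by
          simp [Prod.ext_iff]
        rw [this, map_add, L.map_smul, smul_eq_mul]
      have hL00 : L ((0 : EuclideanSpace ℝ (Fin n)), (0:ℝ)) = 0 := by
        have : ((0 : EuclideanSpace ℝ (Fin n)), (0:ℝ)) = 0 := rfl
        rw [this, map_zero]
      have hc : L ((0 : EuclideanSpace ℝ (Fin n)), (1:ℝ)) < 0 := by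
        have h1 := hL ((0 : EuclideanSpace ℝ (Fin n)), f 0 ^ (t-1) + 1)
          ⟨hU0, show f 0 ^ (t-1) < f 0 ^ (t-1) + 1 by linarith⟩
        rw [hdecomp 0 (f 0 ^ (t-1) + 1), hdecomp 0 (f 0 ^ (t-1)), hL00] at h1
        linarith
      set c : ℝ := L ((0 : EuclideanSpace ℝ (Fin n)), (1:ℝ)) with hcdef
      have hsupp : ∀ x ∈ U, L (x, 0) + f x ^ (t-1) * c ≤ f 0 ^ (t-1) * c := by
        intro x hx
        by_contra hcon
        push_neg at hcon
        set ε : ℝ := (L (x, 0) + f x ^ (t-1) * c - f 0 ^ (t-1) * c) / (-c) with hεdef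
        have hεpos : 0 < ε := div_pos (by linarith) (by linarith)
        have h1 := hL (x, f x ^ (t-1) + ε)
          ⟨hx, show f x ^ (t-1) < f x ^ (t-1) + ε by linarith⟩
        rw [hdecomp x (f x ^ (t-1) + ε), hdecomp 0 (f 0 ^ (t-1)), hL00] at h1
        have hεc : ε * (-c) = L (x, 0) + f x ^ (t-1) * c - f 0 ^ (t-1) * c := by
          rw [hεdef, div_mul_cancel₀]
          linarith
        nlinarith
      -- the linear functional x ↦ L (x, 0)
      set Gl : EuclideanSpace ℝ (Fin n) →L[ℝ] ℝ :=
        (-c)⁻¹ • (L.comp (ContinuousLinearMap.inl ℝ (EuclideanSpace ℝ (Fin n)) ℝ)) with hGldef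
      have hGlval : ∀ x, Gl x = (-c)⁻¹ * L (x, 0) := by
        intro x
        simp [hGldef]
      have hGint : Integrable (fun x => Gl (f x • x)) := Gl.integrable_comp hbint
      have hGzero : ∫ x, Gl (f x • x) = 0 := by
        rw [Gl.integral_comp_comm hbint, hbar, map_zero]
      have hmain : ∀ᵐ x : EuclideanSpace ℝ (Fin n),
          f 0 ^ (t-1) * f x + Gl (f x • x) ≤ f x ^ t := by
        filter_upwards [hae] with x hx
        rcases hx with hx | hx
        · have hfx : 0 < f x := (interior_subset hx : x ∈ S)
          have h1 := hsupp x hx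
          have h2 : f 0 ^ (t-1) + Gl x ≤ f x ^ (t-1) := by
            rw [hGlval x]
            have hcneg : (0:ℝ) < -c := by linarith
            have hkey : ((-c)⁻¹ * L (x, 0)) * (-c) = L (x, 0) := by field_simp [hc.ne]
            nlinarith [h1, hkey, hcneg]
          have h3 : Gl (f x • x) = f x * Gl x := by rw [Gl.map_smul, smul_eq_mul]
          have h4 : (f 0 ^ (t-1) + Gl x) * f x ≤ f x ^ (t-1) * f x :=
            mul_le_mul_of_nonneg_right h2 hfx.le
          have h5 : f x ^ (t-1) * f x = f x ^ t := by
            nth_rewrite 2 [show f x = f x ^ (1:ℝ) by rw [Real.rpow_one]]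
            rw [← Real.rpow_add hfx]
            norm_num
          rw [h3]
          nlinarith
        · rw [hx]
          simp only [mul_zero, zero_smul, map_zero, add_zero, zero_add]
          rw [Real.zero_rpow ht0.ne']
      have hint2 : Integrable (fun x => f 0 ^ (t-1) * f x + Gl (f x • x)) :=
        (hint.const_mul _).add hGint
      have h6 := integral_mono_ae hint2 hft_int hmain
      rw [integral_add (hint.const_mul _) hGint, integral_const_mul, hprob, hGzero] at h6
      simpa using h6
    -- combine A and B
    have hcomb : f z ^ (1 - t) * f 0 ^ (t - 1) ≤ (t ^ n)⁻¹ := by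
      calc f z ^ (1 - t) * f 0 ^ (t - 1) ≤ f z ^ (1 - t) * ∫ y, f y ^ t :=
            mul_le_mul_of_nonneg_left hB hzs.le
        _ ≤ (t ^ n)⁻¹ := hA
    have hlhs : (0:ℝ) < f z ^ (1 - t) * f 0 ^ (t - 1) :=
      mul_pos hzs (Real.rpow_pos_of_pos hf0 _)
    have hlog := Real.log_le_log hlhs hcomb
    rw [Real.log_mul hzs.ne' (Real.rpow_pos_of_pos hf0 _).ne', Real.log_rpow hfz0,
      Real.log_rpow hf0, Real.log_inv, Real.log_pow] at hlog
    have goal2 : (Real.log (f z) - Real.log (f 0)) * (1 - t) ≤ n * (-Real.log t) := by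
      nlinarith
    have goal3 : Real.log (f z) - Real.log (f 0) ≤ n * (-Real.log t) / (1 - t) :=
      (le_div_iff₀ hs0).mpr goal2
    linarith
  -- limit as t → 1⁻
  have hlim : Real.log (f z) ≤ n + Real.log (f 0) := by
    have htend : Filter.Tendsto (fun t : ℝ => (n : ℝ) * (-Real.log t) / (1 - t) + Real.log (f 0))
        (nhdsWithin 1 (Iio 1)) (nhds ((n : ℝ) + Real.log (f 0))) := by
      have h1 : Filter.Tendsto (fun t : ℝ => Real.log t / (t - 1)) (nhdsWithin 1 (Iio 1))
          (nhds 1) := by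
        have hd : HasDerivAt Real.log 1 1 := by simpa using Real.hasDerivAt_log one_ne_zero
        have h2 := (hasDerivAt_iff_tendsto_slope.mp hd).mono_left
          (nhdsWithin_mono _ (fun x hx => (ne_of_lt hx : x ≠ 1)))
        refine h2.congr' ?_
        filter_upwards [self_mem_nhdsWithin] with t ht
        simp [slope_def_field, Real.log_one]
      have h3 := (h1.const_mul (n : ℝ)).add_const (Real.log (f 0))
      rw [mul_one] at h3
      refine h3.congr ?_
      intro t
      have : (1 : ℝ) - t = -(t - 1) := by ring
      rw [mul_div_assoc, this, div_neg, ← neg_div, neg_neg]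
    refine ge_of_tendsto htend ?_
    filter_upwards [Ioo_mem_nhdsLT_of_mem (by constructor <;> norm_num : (1:ℝ) ∈ Ioc 0 1)] with t ht
    exact key t ht
  calc f z = Real.exp (Real.log (f z)) := (Real.exp_log hfz0).symm
    _ ≤ Real.exp ((n : ℝ) + Real.log (f 0)) := Real.exp_le_exp.mpr hlim
    _ = Real.exp n * f 0 := by rw [Real.exp_add, Real.exp_log hf0]
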